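/- Let λ be a typed k-strict partition of length ℓ with λ_i + λ_j ≥ 2k + j − i for all i < j ≤ ℓ. Then H_λ(x;y) equals: 2^{−ℓ} Q_λ(x;y) if λ_ℓ > k; 2^{−ℓ}(Q_λ + e_k(y) Q_{λ−k}) if type(λ) = 1; 2^{−ℓ}(Q_λ − e_k(y) Q_{λ−k}) if type(λ) = 2; and 2^{1−ℓ} Q_λ if λ_ℓ < k; where Q_μ(x;y) = ∏_{i<j} ((1−R_{ij})/(1+R_{ij})) ϑ_μ. -/

import Mathlib

/-!
STATEMENT 13 (Proposition `propSQ`(b)).  Let `λ` be a typed `k`-strict partition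
of length `ℓ = L+1` with `λ_i + λ_j ≥ 2k + j - i` for all `i < j ≤ ℓ`.  Then the
eta polynomial `H_λ = 2^{-ℓ_k(λ)} R^λ ⋆ ϑ_λ` equals `2^{-ℓ} Q_λ` if `λ_ℓ > k`;
`2^{-ℓ}(Q_λ + e_k(y) Q_{λ-k})` if `type(λ) = 1`; `2^{-ℓ}(Q_λ - e_k(y) Q_{λ-k})`
if `type(λ) = 2`; and `2^{1-ℓ} Q_λ` if `λ_ℓ < k`, where
`Q_μ = ∏_{i<j} ((1-R_{ij})/(1+R_{ij})) ϑ_μ`.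
(Setup and conventions as in Statement 12.)
-/

namespace Stmt13

noncomputable section

variable {R : Type*} [CommRing R] [Algebra ℚ R]

def rapply {L : ℕ} (nn : Fin L → Fin L → ℕ) (lam : Fin L → ℤ) : Fin L → ℤ :=
  fun p => lam p + (∑ j, (nn p j : ℤ)) - ∑ h, (nn h p : ℤ)

def pairCoef {L : ℕ} (D : Finset (Fin L × Fin L)) (i j : Fin L) (m : ℕ) : ℚ :=
  if i < j then
    (if (i, j) ∈ D then (if m = 0 then 1 else 2 * (-1 : ℚ) ^ m)
     else (if m = 0 then 1 else if m = 1 then -1 else 0))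
  else (if m = 0 then 1 else 0)

def coefRD {L : ℕ} (D : Finset (Fin L × Fin L)) (nn : Fin L → Fin L → ℕ) : ℚ :=
  ∏ i, ∏ j, pairCoef D i j (nn i j)

def Dlam {L : ℕ} (k : ℕ) (lam : Fin (L + 1) → ℕ) :
    Finset (Fin (L + 1) × Fin (L + 1)) :=
  Finset.univ.filter fun q => q.1 < q.2 ∧
    2 * k + (q.2 : ℕ) ≤ lam q.1 + lam q.2 + (q.1 : ℕ)

def lk {L : ℕ} (k : ℕ) (lam : Fin (L + 1) → ℕ) : ℕ :=
  (Finset.univ.filter fun i => k < lam i).card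

def starval {L : ℕ} (theta : ℤ → R) (etak eta'k : R)
    (t : ℕ) (d : Fin (L + 1)) (lam : Fin (L + 1) → ℕ)
    (nn : Fin (L + 1) → Fin (L + 1) → ℕ) : R :=
  if t = 0 then ∏ i, theta (rapply nn (fun i => (lam i : ℤ)) i)
  else if (∃ j, nn d j ≠ 0) ∨ (∃ i, nn i d ≠ 0) then
    (1 / 2 : ℚ) • ∏ i, theta (rapply nn (fun i => (lam i : ℤ)) i)
  else
    (if t = 1 then etak else eta'k) *
      ∏ i : Fin L, theta (rapply nn (fun i => (lam i : ℤ)) (d.succAbove i))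

def H {L : ℕ} (k : ℕ) (theta : ℤ → R) (etak eta'k : R)
    (t : ℕ) (d : Fin (L + 1)) (lam : Fin (L + 1) → ℕ) : R :=
  ((2 : ℚ) ^ lk k lam)⁻¹ •
    ∑ᶠ nn : Fin (L + 1) → Fin (L + 1) → ℕ,
      coefRD (Dlam k lam) nn • starval theta etak eta'k t d lam nn

/-- `Q_μ = ∏_{i<j} (1-R_{ij})(1+R_{ij})^{-1} ϑ_μ`. -/
def Q (theta : ℤ → R) {M : ℕ} (mu : Fin M → ℤ) : R :=
  ∑ᶠ nn : Fin M → Fin M → ℕ,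
    coefRD (Finset.univ.filter fun q : Fin M × Fin M => q.1 < q.2) nn •
      ∏ i, theta (rapply nn mu i)

end

end Stmt13

namespace Stmt13Aux

open Stmt13 Function

/-- the full raising-operator index set -/
def Dfull (M : ℕ) : Finset (Fin M × Fin M) :=
  Finset.univ.filter fun q : Fin M × Fin M => q.1 < q.2

lemma Q_def {R : Type*} [CommRing R] [Algebra ℚ R] (theta : ℤ → R) {M : ℕ}
    (mu : Fin M → ℤ) :
    Q theta mu = ∑ᶠ nn : Fin M → Fin M → ℕ,
      coefRD (Dfull M) nn • ∏ i, theta (rapply nn mu i) := rfl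

lemma pairCoef_zero {M : ℕ} (D : Finset (Fin M × Fin M)) (i j : Fin M) :
    pairCoef D i j 0 = 1 := by
  simp [pairCoef]

lemma coefRD_upper {M : ℕ} (D : Finset (Fin M × Fin M)) (nn : Fin M → Fin M → ℕ)
    (h : coefRD D nn ≠ 0) : ∀ i j, ¬ i < j → nn i j = 0 := by
  intro i j hij
  by_contra hne
  apply h
  unfold coefRD
  apply Finset.prod_eq_zero (Finset.mem_univ i)
  apply Finset.prod_eq_zero (Finset.mem_univ j)
  unfold pairCoef
  simp [hij, hne]

lemma weighted_rapply {M : ℕ} (nn : Fin M → Fin M → ℕ) (mu : Fin M → ℤ) :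
    ∑ p, (p.val : ℤ) * rapply nn mu p
      = ∑ p, (p.val : ℤ) * mu p
        - ∑ i, ∑ j, ((j.val : ℤ) - (i.val : ℤ)) * (nn i j : ℤ) := by
  have key : ∀ p : Fin M, (p.val : ℤ) * rapply nn mu p
      = (p.val : ℤ) * mu p + (∑ j, (p.val : ℤ) * (nn p j : ℤ))
        - ∑ h, (p.val : ℤ) * (nn h p : ℤ) := by
    intro p; unfold rapply; rw [mul_sub, mul_add, Finset.mul_sum, Finset.mul_sum]
  rw [Finset.sum_congr rfl (fun p _ => key p)]
  rw [Finset.sum_sub_distrib, Finset.sum_add_distrib]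
  rw [Finset.sum_comm (f := fun p h => (p.val : ℤ) * (nn h p : ℤ))]
  have expand : ∀ i j : Fin M,
      ((j.val : ℤ) - (i.val : ℤ)) * (nn i j : ℤ)
        = (j.val : ℤ) * (nn i j : ℤ) - (i.val : ℤ) * (nn i j : ℤ) :=
    fun i j => by ring
  simp only [expand, Finset.sum_sub_distrib]
  ring

lemma nn_le {M : ℕ} (nn : Fin M → Fin M → ℕ) (mu : Fin M → ℤ)
    (hsupp : ∀ i j, ¬ i < j → nn i j = 0)
    (hpos : ∀ p, 0 ≤ rapply nn mu p) (a b : Fin M) :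
    (nn a b : ℤ) ≤ ∑ p, (p.val : ℤ) * mu p := by
  have h1 : (0 : ℤ) ≤ ∑ p, (p.val : ℤ) * rapply nn mu p :=
    Finset.sum_nonneg fun p _ => mul_nonneg (by positivity) (hpos p)
  have h2 : ∑ i, ∑ j, ((j.val : ℤ) - (i.val : ℤ)) * (nn i j : ℤ)
      ≤ ∑ p, (p.val : ℤ) * mu p := by
    have := weighted_rapply nn mu; linarith
  have hterm : ∀ i j : Fin M,
      (0 : ℤ) ≤ ((j.val : ℤ) - (i.val : ℤ)) * (nn i j : ℤ) := by
    intro i j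
    by_cases h : i < j
    · have hv : (i : ℕ) < (j : ℕ) := h
      have : (0 : ℤ) ≤ (j.val : ℤ) - (i.val : ℤ) := by
        omega
      positivity
    · simp [hsupp i j h]
  have hab : (nn a b : ℤ) ≤ ((b.val : ℤ) - (a.val : ℤ)) * (nn a b : ℤ) := by
    by_cases h : a < b
    · have hv : (a : ℕ) < (b : ℕ) := h
      have h1' : (1 : ℤ) ≤ (b.val : ℤ) - (a.val : ℤ) := by omega
      nlinarith [Int.natCast_nonneg (nn a b)]
    · simp [hsupp a b h]
  calc (nn a b : ℤ) ≤ ((b.val : ℤ) - (a.val : ℤ)) * (nn a b : ℤ) := hab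
    _ ≤ ∑ j, ((j.val : ℤ) - (a.val : ℤ)) * (nn a j : ℤ) :=
        Finset.single_le_sum (fun j _ => hterm a j) (Finset.mem_univ b)
    _ ≤ ∑ i, ∑ j, ((j.val : ℤ) - (i.val : ℤ)) * (nn i j : ℤ) :=
        Finset.single_le_sum
          (fun i _ => Finset.sum_nonneg fun j _ => hterm i j) (Finset.mem_univ a)
    _ ≤ _ := h2

lemma finite_S {M : ℕ} (mu : Fin M → ℤ) :
    {nn : Fin M → Fin M → ℕ |
      (∀ i j, ¬ i < j → nn i j = 0) ∧ ∀ p, 0 ≤ rapply nn mu p}.Finite := by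
  classical
  set N := (∑ p : Fin M, (p.val : ℤ) * mu p).toNat with hN
  have hfin : (Set.pi (Set.univ : Set (Fin M)) fun _ =>
      Set.pi (Set.univ : Set (Fin M)) fun _ => Set.Iic N).Finite :=
    Set.Finite.pi fun _ => Set.Finite.pi fun _ => Set.finite_Iic N
  refine hfin.subset ?_
  rintro nn ⟨h1, h2⟩
  rw [Set.mem_pi]
  intro i _
  rw [Set.mem_pi]
  intro j _
  have := nn_le nn mu h1 h2 i j
  simp only [Set.mem_Iic]
  omega

lemma supp_fin {R : Type*} [CommRing R] [Algebra ℚ R]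
    (theta : ℤ → R) (hthneg : ∀ r : ℤ, r < 0 → theta r = 0)
    {M : ℕ} (D : Finset (Fin M × Fin M)) (mu : Fin M → ℤ) :
    (Function.support fun nn : Fin M → Fin M → ℕ =>
      coefRD D nn • ∏ i, theta (rapply nn mu i)).Finite := by
  refine (finite_S mu).subset ?_
  intro nn hnn
  have h1 : coefRD D nn ≠ 0 := fun h => hnn (by simp [Function.mem_support, h])
  have h2 : (∏ i, theta (rapply nn mu i)) ≠ 0 := fun h => hnn (by simp [h])
  refine ⟨coefRD_upper D nn h1, ?_⟩
  intro p
  by_contra hneg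
  push_neg at hneg
  exact h2 (Finset.prod_eq_zero (Finset.mem_univ p) (hthneg _ hneg))

lemma Dlam_eq {L k : ℕ} {lam : Fin (L + 1) → ℕ}
    (hhigh : ∀ i j : Fin (L + 1), i < j →
      2 * k + (j : ℕ) ≤ lam i + lam j + (i : ℕ)) :
    Dlam k lam = Dfull (L + 1) := by
  ext q
  simp only [Dlam, Dfull, Finset.mem_filter, Finset.mem_univ, true_and]
  exact ⟨fun h => h.1, fun h => ⟨h, hhigh _ _ h⟩⟩

lemma pairCoef_castSucc {L : ℕ} (i j : Fin L) (m : ℕ) :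
    pairCoef (Dfull (L + 1)) i.castSucc j.castSucc m = pairCoef (Dfull L) i j m := by
  unfold pairCoef Dfull
  simp [Fin.castSucc_lt_castSucc_iff]

def extf {L : ℕ} (nn : Fin L → Fin L → ℕ) : Fin (L + 1) → Fin (L + 1) → ℕ :=
  fun i j => if hi : (i : ℕ) < L then if hj : (j : ℕ) < L then nn ⟨i, hi⟩ ⟨j, hj⟩ else 0 else 0

lemma extf_castSucc {L : ℕ} (nn : Fin L → Fin L → ℕ) (a b : Fin L) :
    extf nn a.castSucc b.castSucc = nn a b := by
  simp only [extf, Fin.coe_castSucc]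
  rw [dif_pos a.isLt, dif_pos b.isLt]

lemma extf_last_row {L : ℕ} (nn : Fin L → Fin L → ℕ) (j : Fin (L + 1)) :
    extf nn (Fin.last L) j = 0 := by
  simp [extf]

lemma extf_last_col {L : ℕ} (nn : Fin L → Fin L → ℕ) (i : Fin (L + 1)) :
    extf nn i (Fin.last L) = 0 := by
  simp [extf]

lemma extf_inj {L : ℕ} : Function.Injective (extf (L := L)) := by
  intro x y h
  funext a b
  have := congrFun (congrFun h a.castSucc) b.castSucc
  rwa [extf_castSucc, extf_castSucc] at this

lemma mem_range_extf {L : ℕ} (nn : Fin (L + 1) → Fin (L + 1) → ℕ) :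
    nn ∈ Set.range (extf (L := L)) ↔
      (∀ j, nn (Fin.last L) j = 0) ∧ (∀ i, nn i (Fin.last L) = 0) := by
  constructor
  · rintro ⟨m, rfl⟩
    exact ⟨fun j => extf_last_row m j, fun i => extf_last_col m i⟩
  · rintro ⟨h1, h2⟩
    refine ⟨fun a b => nn a.castSucc b.castSucc, ?_⟩
    funext i j
    by_cases hi : (i : ℕ) < L
    · by_cases hj : (j : ℕ) < L
      · have h3 : extf (fun a b => nn a.castSucc b.castSucc) i j
            = nn (⟨(i : ℕ), hi⟩ : Fin L).castSucc (⟨(j : ℕ), hj⟩ : Fin L).castSucc := by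
          simp only [extf]; rw [dif_pos hi, dif_pos hj]
        rw [h3]
        congr 1 <;> exact Fin.ext (by simp)
      · have hj' : j = Fin.last L := Fin.ext (by have := j.isLt; simp [Fin.val_last]; omega)
        subst hj'
        rw [extf_last_col, h2]
    · have hi' : i = Fin.last L := Fin.ext (by have := i.isLt; simp [Fin.val_last]; omega)
      subst hi'
      rw [extf_last_row, h1]

lemma rapply_extf {L : ℕ} (nn : Fin L → Fin L → ℕ) (mu : Fin (L + 1) → ℤ) (a : Fin L) :
    rapply (extf nn) mu a.castSucc = rapply nn (fun b => mu b.castSucc) a := by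
  unfold rapply
  congr 1
  · congr 1
    rw [Fin.sum_univ_castSucc]
    simp [extf_castSucc, extf_last_col]
  · rw [Fin.sum_univ_castSucc]
    simp [extf_castSucc, extf_last_row]

lemma coefRD_extf {L : ℕ} (nn : Fin L → Fin L → ℕ) :
    coefRD (Dfull (L + 1)) (extf nn) = coefRD (Dfull L) nn := by
  unfold coefRD
  rw [Fin.prod_univ_castSucc]
  have hlast : (∏ j, pairCoef (Dfull (L + 1)) (Fin.last L) j (extf nn (Fin.last L) j)) = 1 :=
    Finset.prod_eq_one fun j _ => by rw [extf_last_row, pairCoef_zero]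
  rw [hlast, mul_one]
  refine Finset.prod_congr rfl fun a _ => ?_
  rw [Fin.prod_univ_castSucc, extf_last_col, pairCoef_zero, mul_one]
  exact Finset.prod_congr rfl fun b _ => by rw [extf_castSucc, pairCoef_castSucc]

lemma sum_eq {R : Type*} [CommRing R] [Algebra ℚ R]
    {L : ℕ} (k : ℕ) (theta : ℤ → R) (hthneg : ∀ r : ℤ, r < 0 → theta r = 0)
    (ek : R) (lam : Fin (L + 1) → ℕ) (hlam : lam (Fin.last L) = k)
    (ε : ℚ) (eta : R) (heta : eta = (1 / 2 : ℚ) • (theta (k : ℤ) + ε • ek)) :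
    (∑ᶠ nn : Fin (L + 1) → Fin (L + 1) → ℕ, coefRD (Dfull (L + 1)) nn •
      (if (∃ j, nn (Fin.last L) j ≠ 0) ∨ (∃ i, nn i (Fin.last L) ≠ 0) then
          (1 / 2 : ℚ) • ∏ i, theta (rapply nn (fun i => (lam i : ℤ)) i)
       else eta * ∏ i : Fin L,
          theta (rapply nn (fun i => (lam i : ℤ)) i.castSucc)))
    = (1 / 2 : ℚ) • (Q theta (fun i => (lam i : ℤ)) +
        ε • (ek * Q theta (fun i : Fin L => (lam i.castSucc : ℤ)))) := by
  classical
  set lamZ : Fin (L + 1) → ℤ := fun i => (lam i : ℤ) with hlamZ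
  set f1 : (Fin (L + 1) → Fin (L + 1) → ℕ) → R := fun nn =>
    (1 / 2 : ℚ) • (coefRD (Dfull (L + 1)) nn • ∏ i, theta (rapply nn lamZ i)) with hf1
  set f2 : (Fin (L + 1) → Fin (L + 1) → ℕ) → R := fun nn =>
    if (∀ j, nn (Fin.last L) j = 0) ∧ (∀ i, nn i (Fin.last L) = 0) then
      (ε / 2 : ℚ) • (coefRD (Dfull (L + 1)) nn •
        (ek * ∏ i : Fin L, theta (rapply nn lamZ i.castSucc))) else 0
    with hf2
  have step1 : ∀ nn : Fin (L + 1) → Fin (L + 1) → ℕ,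
      coefRD (Dfull (L + 1)) nn •
      (if (∃ j, nn (Fin.last L) j ≠ 0) ∨ (∃ i, nn i (Fin.last L) ≠ 0) then
          (1 / 2 : ℚ) • ∏ i, theta (rapply nn lamZ i)
       else eta * ∏ i : Fin L, theta (rapply nn lamZ i.castSucc))
      = f1 nn + f2 nn := by
    intro nn
    by_cases hA : (∃ j, nn (Fin.last L) j ≠ 0) ∨ (∃ i, nn i (Fin.last L) ≠ 0)
    · rw [if_pos hA]
      have hB : ¬ ((∀ j, nn (Fin.last L) j = 0) ∧ (∀ i, nn i (Fin.last L) = 0)) := by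
        push_neg
        intro h1
        rcases hA with ⟨j, hj⟩ | ⟨i, hi⟩
        · exact absurd (h1 j) hj
        · exact ⟨i, hi⟩
      rw [hf2]
      simp only [if_neg hB, add_zero, hf1]
      module
    · rw [if_neg hA]
      push_neg at hA
      obtain ⟨hA1, hA2⟩ := hA
      rw [hf2]
      simp only [if_pos (And.intro hA1 hA2)]
      have hr : rapply nn lamZ (Fin.last L) = (k : ℤ) := by
        unfold rapply
        simp [hA1, hA2, hlamZ, hlam]
      have hprod : ∏ i, theta (rapply nn lamZ i)
          = theta (k : ℤ) * ∏ i : Fin L, theta (rapply nn lamZ i.castSucc) := by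
        rw [Fin.prod_univ_succAbove (fun i => theta (rapply nn lamZ i)) (Fin.last L), hr]
        simp only [Fin.succAbove_last]
      rw [heta, hf1]
      simp only [hprod]
      rw [smul_mul_assoc, add_mul, smul_mul_assoc]
      module
  rw [finsum_congr step1]
  have hSfin := finite_S (M := L + 1) lamZ
  have h1fin : (Function.support f1).Finite := by
    refine (supp_fin theta hthneg (Dfull (L + 1)) lamZ).subset ?_
    intro nn hnn
    simp only [hf1, Function.mem_support] at hnn ⊢
    intro h
    exact hnn (by rw [h, smul_zero])
  have h2fin : (Function.support f2).Finite := by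
    refine hSfin.subset ?_
    intro nn hnn
    simp only [hf2, Function.mem_support] at hnn
    by_cases hB : (∀ j, nn (Fin.last L) j = 0) ∧ (∀ i, nn i (Fin.last L) = 0)
    · rw [if_pos hB] at hnn
      have hc : coefRD (Dfull (L + 1)) nn ≠ 0 := by
        intro h; exact hnn (by rw [h, zero_smul, smul_zero])
      have hP : (∏ i : Fin L, theta (rapply nn lamZ i.castSucc)) ≠ 0 := by
        intro h; exact hnn (by rw [h, mul_zero, smul_zero, smul_zero])
      refine ⟨coefRD_upper _ _ hc, ?_⟩
      intro p
      by_cases hp : p = Fin.last L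
      · subst hp
        have hr : rapply nn lamZ (Fin.last L) = (k : ℤ) := by
          unfold rapply; simp [hB.1, hB.2, hlamZ, hlam]
        rw [hr]; positivity
      · obtain ⟨i, rfl⟩ := Fin.exists_succAbove_eq hp
        rw [Fin.succAbove_last] at *
        by_contra hneg
        push_neg at hneg
        exact hP (Finset.prod_eq_zero (Finset.mem_univ i) (hthneg _ hneg))
    · rw [if_neg hB] at hnn
      exact absurd rfl hnn
  rw [finsum_add_distrib h1fin h2fin]
  have e1 : ∑ᶠ nn, f1 nn = (1 / 2 : ℚ) • Q theta lamZ := by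
    rw [Q_def, smul_finsum' _ (supp_fin theta hthneg (Dfull (L + 1)) lamZ)]
  have e2 : ∑ᶠ nn, f2 nn
      = (ε / 2 : ℚ) • (ek * Q theta (fun i : Fin L => lamZ i.castSucc)) := by
    have hind : f2 = Set.indicator
        {nn : Fin (L + 1) → Fin (L + 1) → ℕ |
          (∀ j, nn (Fin.last L) j = 0) ∧ (∀ i, nn i (Fin.last L) = 0)}
        (fun nn => (ε / 2 : ℚ) • (coefRD (Dfull (L + 1)) nn •
          (ek * ∏ i : Fin L, theta (rapply nn lamZ i.castSucc)))) := by
      funext nn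
      rw [Set.indicator_apply, hf2]
      rfl
    have hBrange : {nn : Fin (L + 1) → Fin (L + 1) → ℕ |
          (∀ j, nn (Fin.last L) j = 0) ∧ (∀ i, nn i (Fin.last L) = 0)}
        = Set.range (extf (L := L)) := by
      ext nn; rw [Set.mem_setOf_eq, mem_range_extf]
    rw [hind, ← finsum_mem_def, hBrange, finsum_mem_range extf_inj]
    have key : ∀ m : Fin L → Fin L → ℕ,
        (ε / 2 : ℚ) • (coefRD (Dfull (L + 1)) (extf m) •
          (ek * ∏ i : Fin L, theta (rapply (extf m) lamZ i.castSucc)))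
        = (ε / 2 : ℚ) • (ek * (coefRD (Dfull L) m •
            ∏ i : Fin L, theta (rapply m (fun i : Fin L => lamZ i.castSucc) i))) := by
      intro m
      have hp : (∏ i : Fin L, theta (rapply (extf m) lamZ i.castSucc))
          = ∏ i : Fin L, theta (rapply m (fun i : Fin L => lamZ i.castSucc) i) :=
        Finset.prod_congr rfl fun i _ => by rw [rapply_extf]
      rw [coefRD_extf, hp, mul_smul_comm]
    rw [finsum_congr key]
    have hfin' : (Function.support fun m : Fin L → Fin L → ℕ =>
        coefRD (Dfull L) m •
          ∏ i : Fin L, theta (rapply m (fun i : Fin L => lamZ i.castSucc) i)).Finite :=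
      supp_fin theta hthneg (Dfull L) _
    have hfin'' : (Function.support fun m : Fin L → Fin L → ℕ =>
        ek * (coefRD (Dfull L) m •
          ∏ i : Fin L, theta (rapply m (fun i : Fin L => lamZ i.castSucc) i))).Finite := by
      refine hfin'.subset ?_
      intro m hm
      simp only [Function.mem_support] at hm ⊢
      intro h
      exact hm (by rw [h, mul_zero])
    rw [← smul_finsum' _ hfin'']
    congr 1
    rw [Q_def]
    exact (mul_finsum' _ _ hfin').symm
  rw [e1, e2]
  module

end Stmt13Aux

open Stmt13 in
theorem stmt13 (R : Type*) [CommRing R] [Algebra ℚ R]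
    (k : ℕ) (hk : 1 ≤ k)
    (theta : ℤ → R) (hthneg : ∀ r : ℤ, r < 0 → theta r = 0)
    (ek : R) (etak eta'k : R)
    (hetak : etak = (1 / 2 : ℚ) • (theta k + ek))
    (heta'k : eta'k = (1 / 2 : ℚ) • (theta k - ek))
    (L : ℕ) (lam : Fin (L + 1) → ℕ)
    (hanti : Antitone lam) (hpos : ∀ i, 0 < lam i)
    (hstrict : ∀ i j : Fin (L + 1), i < j → k < lam i → lam i ≠ lam j)
    (t : ℕ) (ht : t ≤ 2) (htype : t ≠ 0 ↔ ∃ i, lam i = k)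
    (d : Fin (L + 1)) (hd : t ≠ 0 → (lam d = k ∧ ∀ i, i < d → k < lam i))
    (hhigh : ∀ i j : Fin (L + 1), i < j →
      2 * k + (j : ℕ) ≤ lam i + lam j + (i : ℕ)) :
    (k < lam (Fin.last L) →
      H k theta etak eta'k t d lam =
        ((2 : ℚ) ^ (L + 1))⁻¹ • Q theta (fun i => (lam i : ℤ))) ∧
    (t = 1 →
      H k theta etak eta'k t d lam =
        ((2 : ℚ) ^ (L + 1))⁻¹ •
          (Q theta (fun i => (lam i : ℤ)) +
            ek * Q theta (fun i : Fin L => (lam (d.succAbove i) : ℤ)))) ∧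
    (t = 2 →
      H k theta etak eta'k t d lam =
        ((2 : ℚ) ^ (L + 1))⁻¹ •
          (Q theta (fun i => (lam i : ℤ)) -
            ek * Q theta (fun i : Fin L => (lam (d.succAbove i) : ℤ)))) ∧
    (lam (Fin.last L) < k →
      H k theta etak eta'k t d lam =
        ((2 : ℚ) ^ L)⁻¹ • Q theta (fun i => (lam i : ℤ))) := by
  classical
  open Stmt13Aux in
  have hgt : ∀ i : Fin (L + 1), (i : ℕ) < L → lam (Fin.last L) ≤ k → k < lam i := by
    intro i hi hle
    have h := hhigh i (Fin.last L) (by rw [Fin.lt_def]; simpa using hi)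
    simp only [Fin.val_last] at h
    omega
  have hlkL : lam (Fin.last L) ≤ k → lk k lam = L := by
    intro hle
    unfold lk
    have hfe : (Finset.univ.filter fun i : Fin (L + 1) => k < lam i)
        = Finset.univ.filter fun i => i ≠ Fin.last L := by
      apply Finset.filter_congr
      intro i _
      constructor
      · intro h hi
        subst hi
        omega
      · intro h
        have hiv : (i : ℕ) ≠ L := fun hv => h (Fin.ext (by simp [hv, Fin.val_last]))
        have := i.isLt
        exact hgt i (by omega) hle
    rw [hfe, Finset.filter_ne', Finset.card_erase_of_mem (Finset.mem_univ _)]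
    simp
  refine ⟨?_, ?_, ?_, ?_⟩
  · intro hlt
    have ht0 : t = 0 := by
      by_contra h
      obtain ⟨i, hik⟩ := htype.mp h
      have := hanti (Fin.le_last i)
      omega
    have hlk : lk k lam = L + 1 := by
      unfold lk
      rw [Finset.filter_true_of_mem
        (fun i _ => lt_of_lt_of_le hlt (hanti (Fin.le_last i)))]
      simp
    unfold H
    rw [hlk, Dlam_eq hhigh, Q_def]
    congr 1
    apply finsum_congr
    intro nn
    rw [ht0]
    simp [starval]
  · intro ht1
    subst ht1
    obtain ⟨hdk, -⟩ := hd (by norm_num)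
    have hdlast : d = Fin.last L := by
      by_contra hne
      have hdv : (d : ℕ) ≠ L := fun hv => hne (Fin.ext (by simp [hv, Fin.val_last]))
      have hdL : (d : ℕ) < L := by have := d.isLt; omega
      have h := hhigh d (Fin.last L) (by rw [Fin.lt_def]; simpa using hdL)
      have h2 := hanti (Fin.le_last d)
      simp only [Fin.val_last] at h
      omega
    subst hdlast
    simp only [Fin.succAbove_last]
    have hlk := hlkL (le_of_eq hdk)
    unfold H
    rw [hlk, Dlam_eq hhigh]
    have hsv : ∀ nn : Fin (L + 1) → Fin (L + 1) → ℕ,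
        coefRD (Dfull (L + 1)) nn • starval theta etak eta'k 1 (Fin.last L) lam nn
        = coefRD (Dfull (L + 1)) nn •
          (if (∃ j, nn (Fin.last L) j ≠ 0) ∨ (∃ i, nn i (Fin.last L) ≠ 0) then
            (1 / 2 : ℚ) • ∏ i, theta (rapply nn (fun i => (lam i : ℤ)) i)
          else etak * ∏ i : Fin L, theta (rapply nn (fun i => (lam i : ℤ)) i.castSucc)) := by
      intro nn
      congr 1
      simp [starval, Fin.succAbove_last]
    rw [finsum_congr hsv,
      sum_eq k theta hthneg ek lam hdk 1 etak (by rw [one_smul]; exact hetak)]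
    rw [one_smul, smul_smul]
    have hpow : ((2 : ℚ) ^ L)⁻¹ * (1 / 2) = ((2 : ℚ) ^ (L + 1))⁻¹ := by
      rw [pow_succ, mul_inv]
      norm_num
    rw [hpow]
  · intro ht2
    subst ht2
    obtain ⟨hdk, -⟩ := hd (by norm_num)
    have hdlast : d = Fin.last L := by
      by_contra hne
      have hdv : (d : ℕ) ≠ L := fun hv => hne (Fin.ext (by simp [hv, Fin.val_last]))
      have hdL : (d : ℕ) < L := by have := d.isLt; omega
      have h := hhigh d (Fin.last L) (by rw [Fin.lt_def]; simpa using hdL)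
      have h2 := hanti (Fin.le_last d)
      simp only [Fin.val_last] at h
      omega
    subst hdlast
    simp only [Fin.succAbove_last]
    have hlk := hlkL (le_of_eq hdk)
    unfold H
    rw [hlk, Dlam_eq hhigh]
    have hsv : ∀ nn : Fin (L + 1) → Fin (L + 1) → ℕ,
        coefRD (Dfull (L + 1)) nn • starval theta etak eta'k 2 (Fin.last L) lam nn
        = coefRD (Dfull (L + 1)) nn •
          (if (∃ j, nn (Fin.last L) j ≠ 0) ∨ (∃ i, nn i (Fin.last L) ≠ 0) then
            (1 / 2 : ℚ) • ∏ i, theta (rapply nn (fun i => (lam i : ℤ)) i)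
          else eta'k * ∏ i : Fin L, theta (rapply nn (fun i => (lam i : ℤ)) i.castSucc)) := by
      intro nn
      congr 1
      simp [starval, Fin.succAbove_last]
    rw [finsum_congr hsv,
      sum_eq k theta hthneg ek lam hdk (-1) eta'k
        (by rw [neg_one_smul, ← sub_eq_add_neg]; exact heta'k)]
    rw [neg_one_smul, ← sub_eq_add_neg, smul_smul]
    have hpow : ((2 : ℚ) ^ L)⁻¹ * (1 / 2) = ((2 : ℚ) ^ (L + 1))⁻¹ := by
      rw [pow_succ, mul_inv]
      norm_num
    rw [hpow]
  · intro hlt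
    have ht0 : t = 0 := by
      by_contra h
      obtain ⟨i, hik⟩ := htype.mp h
      rcases eq_or_ne i (Fin.last L) with rfl | hne
      · omega
      · have hiv : (i : ℕ) ≠ L := fun hv => hne (Fin.ext (by simp [hv, Fin.val_last]))
        have := i.isLt
        have := hgt i (by omega) (le_of_lt hlt)
        omega
    have hlk := hlkL (le_of_lt hlt)
    unfold H
    rw [hlk, Dlam_eq hhigh, Q_def]
    congr 1
    apply finsum_congr
    intro nn
    rw [ht0]
    simp [starval]
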